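/- Suppose the washing-machine constraints hold on a finite window W = {a,...,b}: x(t) ∈ {0,1} for t ∈ W, x(t) = 0 outside W, x(t) − x(t−1) = z(t) − y(t) on W ∪ {b+1}, z(t) ≤ x(t), y(t) + x(t) ≤ 1, z, y ∈ {0,1}, Σ_{t∈W} z(t) ≤ 1, Σ_{t∈W} y(t) ≤ 1, and Σ_{t∈W} x(t) = k ≥ 1. Then the set {t ∈ W : x(t) = 1} is a contiguous interval of length k, i.e., there exists s with a ≤ s and s + k − 1 ≤ b such that x(t) = 1 iff s ≤ t ≤ s + k − 1. -/
import Mathlib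


open Finset

/-- The start-up/shut-down washing-machine constraints on a window `W = {a,…,b}`
force the ON periods to form a single contiguous block of length `k`. -/
theorem stmt_6 (a b k : ℤ) (hab : a ≤ b) (hk : 1 ≤ k)
    (x y z : ℤ → ℤ)
    (hx01 : ∀ t ∈ Finset.Icc a b, x t = 0 ∨ x t = 1)
    (hxout : ∀ t, t ∉ Finset.Icc a b → x t = 0)
    (hy01 : ∀ t ∈ Finset.Icc a (b + 1), y t = 0 ∨ y t = 1)
    (hz01 : ∀ t ∈ Finset.Icc a (b + 1), z t = 0 ∨ z t = 1)
    (hrec : ∀ t ∈ Finset.Icc a (b + 1), x t - x (t - 1) = z t - y t)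
    (hzx : ∀ t ∈ Finset.Icc a b, z t ≤ x t)
    (hyx : ∀ t ∈ Finset.Icc a b, y t + x t ≤ 1)
    (hzsum : ∑ t ∈ Finset.Icc a b, z t ≤ 1)
    (hysum : ∑ t ∈ Finset.Icc a b, y t ≤ 1)
    (hxsum : ∑ t ∈ Finset.Icc a b, x t = k) :
    ∃ s : ℤ, a ≤ s ∧ s + k - 1 ≤ b ∧
      ∀ t ∈ Finset.Icc a b, (x t = 1 ↔ s ≤ t ∧ t ≤ s + k - 1) := by
  classical
  set W := Finset.Icc a b with hW
  set S := W.filter (fun t => x t = 1) with hS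
  have hz0 : ∀ t ∈ W, 0 ≤ z t := by
    intro t ht
    have ht' : t ∈ Finset.Icc a (b + 1) := by
      simp only [hW, Finset.mem_Icc] at ht ⊢; omega
    rcases hz01 t ht' with h | h <;> omega
  have htrans : ∀ u ∈ Finset.Icc a (b + 1), x u = 1 → x (u - 1) = 0 → z u = 1 := by
    intro u hu h1 h0
    have hr := hrec u hu
    rcases hz01 u hu with h | h <;> rcases hy01 u hu with h' | h' <;> omega
  have hcard : (S.card : ℤ) = k := by
    rw [← hxsum, hS, ← Finset.sum_boole]
    apply Finset.sum_congr rfl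
    intro t ht
    rcases hx01 t ht with h | h <;> simp [h]
  have hSne : S.Nonempty := by
    rcases Finset.eq_empty_or_nonempty S with h | h
    · rw [h] at hcard; simp at hcard; omega
    · exact h
  set s := S.min' hSne with hsdef
  set e := S.max' hSne with hedef
  have hsS : s ∈ S := S.min'_mem hSne
  have heS : e ∈ S := S.max'_mem hSne
  have hsW : s ∈ W := (Finset.mem_filter.mp hsS).1
  have heW : e ∈ W := (Finset.mem_filter.mp heS).1
  have hxs : x s = 1 := (Finset.mem_filter.mp hsS).2
  have hxe : x e = 1 := (Finset.mem_filter.mp heS).2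
  have hsab : a ≤ s ∧ s ≤ b := Finset.mem_Icc.mp hsW
  have heab : a ≤ e ∧ e ≤ b := Finset.mem_Icc.mp heW
  have hmemW : ∀ t : ℤ, s ≤ t → t ≤ e → t ∈ W := by
    intro t h1 h2; rw [hW, Finset.mem_Icc]; omega
  have hxs1 : x (s - 1) = 0 := by
    by_cases h : s - 1 ∈ W
    · rcases hx01 _ h with h' | h'
      · exact h'
      · exfalso
        have : s - 1 ∈ S := Finset.mem_filter.mpr ⟨h, h'⟩
        have := S.min'_le _ this
        omega
    · exact hxout _ h
  have hsI : s ∈ Finset.Icc a (b + 1) := by rw [Finset.mem_Icc]; omega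
  have hzs : z s = 1 := htrans s hsI hxs hxs1
  have hnogap : ∀ t, s ≤ t → t ≤ e → x t = 1 := by
    intro t hst hte
    by_contra hxt
    have htW : t ∈ W := hmemW t hst hte
    have hxt0 : x t = 0 := (hx01 t htW).resolve_right hxt
    have hte' : t < e := by
      rcases lt_or_eq_of_le hte with h | h
      · exact h
      · exfalso; rw [h] at hxt0; omega
    set T := (Finset.Icc (t + 1) e).filter (fun u => x u = 1) with hT
    have heT : e ∈ T := by
      rw [hT, Finset.mem_filter, Finset.mem_Icc]
      exact ⟨⟨by omega, le_refl e⟩, hxe⟩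
    have hTne : T.Nonempty := ⟨e, heT⟩
    set v := T.min' hTne with hvdef
    have hvT : v ∈ T := T.min'_mem hTne
    have hv1 : x v = 1 := (Finset.mem_filter.mp hvT).2
    have hvI : t + 1 ≤ v ∧ v ≤ e := Finset.mem_Icc.mp (Finset.mem_filter.mp hvT).1
    have hvW : v ∈ W := hmemW v (by omega) hvI.2
    have hxv1 : x (v - 1) = 0 := by
      by_cases h : v - 1 = t
      · rw [h]; exact hxt0
      · have hvm : v - 1 ∈ W := hmemW (v - 1) (by omega) (by omega)
        rcases hx01 _ hvm with h' | h'
        · exact h'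
        · exfalso
          have : v - 1 ∈ T := by
            rw [hT, Finset.mem_filter, Finset.mem_Icc]
            exact ⟨⟨by omega, by omega⟩, h'⟩
          have := T.min'_le _ this
          omega
    have hvI' : v ∈ Finset.Icc a (b + 1) := by
      rw [Finset.mem_Icc]
      have := Finset.mem_Icc.mp hvW
      omega
    have hzv : z v = 1 := htrans v hvI' hv1 hxv1
    have hne : s ≠ v := by omega
    have hsub : ({s, v} : Finset ℤ) ⊆ W := by
      intro u hu
      rcases Finset.mem_insert.mp hu with h | h
      · rw [h]; exact hsW
      · rw [Finset.mem_singleton.mp h]; exact hvW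
    have h2 : (2 : ℤ) ≤ ∑ u ∈ W, z u := by
      calc (2 : ℤ) = ∑ u ∈ ({s, v} : Finset ℤ), z u := by
            rw [Finset.sum_pair hne]; omega
        _ ≤ ∑ u ∈ W, z u :=
            Finset.sum_le_sum_of_subset_of_nonneg hsub (fun i hi _ => hz0 i hi)
    omega
  have hSeq : S = Finset.Icc s e := by
    ext t
    simp only [hS, Finset.mem_filter, Finset.mem_Icc]
    constructor
    · intro ⟨htW, hxt⟩
      have h1 := S.min'_le t (Finset.mem_filter.mpr ⟨htW, hxt⟩)
      have h2 := S.le_max' t (Finset.mem_filter.mpr ⟨htW, hxt⟩)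
      exact ⟨h1, h2⟩
    · intro ⟨h1, h2⟩
      exact ⟨Finset.mem_Icc.mp (hmemW t h1 h2) |>.imp id id |> fun h => Finset.mem_Icc.mpr h,
        hnogap t h1 h2⟩
  have hcard2 : ((Finset.Icc s e).card : ℤ) = e - s + 1 := by
    rw [Int.card_Icc]
    have hse : s ≤ e := by
      have := S.min'_le e heS; omega
    omega
  have hek : e = s + k - 1 := by
    rw [hSeq] at hcard; omega
  refine ⟨s, hsab.1, by omega, ?_⟩
  intro t htW
  constructor
  · intro hxt
    have : t ∈ S := Finset.mem_filter.mpr ⟨htW, hxt⟩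
    rw [hSeq, Finset.mem_Icc] at this
    omega
  · intro ⟨h1, h2⟩
    exact hnogap t h1 (by omega)
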